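/- Let a < b be coprime positive integers and let ij and km (with i < j and k < m) be two a,b-admissible diagonals of P_{b+1} that form an edge of the obstruction graph OG(a,b). Then j = m. -/
import Mathlib


/-- `S(a,b) = { ⌊ib/a⌋ : i = 1, …, a-1 }`. -/
def Sab (a b : ℕ) : Finset ℕ := (Finset.Icc 1 (a - 1)).image (fun i => i * b / a)

/-- A diagonal of the polygon `P_{b+1}` with boundary points `0, 1, …, b`:
a pair `i < j` with `j - i ≥ 2` and `(i, j) ≠ (0, b)`. -/
def IsDiagonal (b i j : ℕ) : Prop := i + 2 ≤ j ∧ j ≤ b ∧ ¬(i = 0 ∧ j = b)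

/-- A diagonal `ij` is `a,b`-admissible if it separates `j - i - 1` and `b - j + i`
boundary points, both of which lie in `S(a,b)`. -/
def Admissible (a b : ℕ) (d : ℕ × ℕ) : Prop :=
  IsDiagonal b d.1 d.2 ∧ d.2 - d.1 - 1 ∈ Sab a b ∧ b - d.2 + d.1 ∈ Sab a b

/-- Two diagonals `ij` and `km` cross if `i < k < j < m` or `k < i < m < j`. -/
def Crosses (d d' : ℕ × ℕ) : Prop :=
  (d.1 < d'.1 ∧ d'.1 < d.2 ∧ d.2 < d'.2) ∨ (d'.1 < d.1 ∧ d.1 < d'.2 ∧ d'.2 < d.2)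

/-- An `a,b`-Dyck path: a north/east lattice path from `(0,0)` to `(b,a)` staying weakly
above `y = (a/b) x`.  It is encoded by the height `h u` of its unique east step over the
column interval `[u, u+1]`, for `0 ≤ u < b`; we normalize `h u = a` for `u ≥ b`. -/
structure DyckPath (a b : ℕ) where
  h : ℕ → ℕ
  mono : Monotone h
  norm : ∀ x, b ≤ x → h x = a
  above : ∀ x, x < b → a * (x + 1) ≤ b * h x

/-- The lattice point `(x, y)` lies on `D` at the bottom of a north step of `D`. -/
def BottomNorth (a b : ℕ) (D : DyckPath a b) (x y : ℕ) : Prop :=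
  x ≤ b ∧ (if x = 0 then 0 else D.h (x - 1)) ≤ y ∧ y < D.h x

/-- The laser of slope `a/b` fired northeast from the lattice point `(x, y)` of `D` first
hits `D` in the interior of the east step whose right endpoint has `x`-coordinate `k`;
the associated laser diagonal is `d(P) = (x, k)`.  The laser passes strictly below the
right endpoint of every earlier east step and strictly above the one it hits. -/
def IsLaserDiag (a b : ℕ) (D : DyckPath a b) (x y k : ℕ) : Prop :=
  x < k ∧ k ≤ b ∧ b * D.h (k - 1) < b * y + a * (k - x) ∧
    ∀ u, x ≤ u → u + 1 < k → b * y + a * (u + 1 - x) < b * D.h u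

/-- `F(D)`: the set of laser diagonals `d(P)` of the lattice points `P ≠ (0,0)` at the
bottoms of north steps of `D`. -/
def FD (a b : ℕ) (D : DyckPath a b) : Set (ℕ × ℕ) :=
  { d | ∃ y, BottomNorth a b D d.1 y ∧ (d.1, y) ≠ (0, 0) ∧ IsLaserDiag a b D d.1 y d.2 }

/-- A finite abstract simplicial complex on the ground set `E`: a downward closed
collection of finite subsets of `E`. -/
structure AbsCplx (E : Type*) where
  faces : Set (Finset E)
  down : ∀ F ∈ faces, ∀ F' ⊆ F, F' ∈ faces

/-- The rational associahedron `Âss(a,b)`: faces are the sets of pairwise noncrossing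
`a,b`-admissible diagonals. -/
def hatAss (a b : ℕ) : AbsCplx (ℕ × ℕ) where
  faces := { F | (∀ d ∈ F, Admissible a b d) ∧ ∀ d ∈ F, ∀ d' ∈ F, ¬Crosses d d' }
  down := fun F hF F' hsub =>
    ⟨fun d hd => hF.1 d (hsub hd), fun d hd d' hd' => hF.2 d (hsub hd) d' (hsub hd')⟩

/-- The rational associahedron `Ass(a,b)`: faces are the subsets of the sets `F(D)`,
as `D` ranges over `a,b`-Dyck paths. -/
def Ass (a b : ℕ) : AbsCplx (ℕ × ℕ) where
  faces := { F | ∃ D : DyckPath a b, ∀ d ∈ F, d ∈ FD a b D }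
  down := fun F hF F' hsub =>
    let ⟨D, hD⟩ := hF
    ⟨D, fun d hd => hD d (hsub hd)⟩

/-- Two distinct `a,b`-admissible diagonals `d, d'` form an edge of the obstruction graph
`OG(a,b)` exactly when `{d, d'}` is a face of `Âss(a,b)` but not of `Ass(a,b)`. -/
def OGEdge (a b : ℕ) (d d' : ℕ × ℕ) : Prop :=
  d ≠ d' ∧ ({d, d'} : Finset (ℕ × ℕ)) ∈ (hatAss a b).faces ∧
    ({d, d'} : Finset (ℕ × ℕ)) ∉ (Ass a b).faces


section ObstructionAux

/-- Ceiling of `a*t/b` as a natural number. -/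
private def Cf (a b t : ℕ) : ℕ := (a * t + (b - 1)) / b

private lemma div_lb (b X : ℕ) (hb : 0 < b) : X ≤ b * ((X + (b - 1)) / b) := by
  have h := Nat.div_add_mod (X + (b - 1)) b
  have h2 : (X + (b - 1)) % b < b := Nat.mod_lt _ hb
  omega

private lemma Cf_mono {a b s t : ℕ} (h : s ≤ t) : Cf a b s ≤ Cf a b t :=
  Nat.div_le_div_right (by have := Nat.mul_le_mul (le_refl a) h; omega)

private lemma Cf_lb (a b t : ℕ) (hb : 0 < b) : a * t ≤ b * Cf a b t :=
  div_lb b (a * t) hb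

private lemma Cf_b (a b : ℕ) (hb : 0 < b) : Cf a b b = a := by
  show (a * b + (b - 1)) / b = a
  rw [mul_comm, Nat.mul_add_div hb, Nat.div_eq_of_lt (by omega)]
  omega

/-- A laser fired from the left end of a flat segment of the right length lands
at the right end of the flat segment. -/
private lemma laser_flat {a b : ℕ} (D : DyckPath a b) (x y kk p r : ℕ)
    (hb : 0 < b) (hxk : x < kk) (hkb : kk ≤ b)
    (hflat : ∀ u, x ≤ u → u < kk → D.h u = y + p)
    (hr : 1 ≤ r) (hra : r < a) (heq : a * (kk - x) + r = p * b + a) :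
    IsLaserDiag a b D x y kk := by
  obtain ⟨dk, hdk⟩ : ∃ dk, kk - x = dk := ⟨_, rfl⟩
  rw [hdk] at heq
  refine ⟨hxk, hkb, ?_, ?_⟩
  · rw [hflat (kk - 1) (by omega) (by omega), hdk]
    have h1 : b * (y + p) = b * y + b * p := by ring
    have h2 : b * p = p * b := Nat.mul_comm b p
    omega
  · intro u hu hu2
    rw [hflat u hu (by omega)]
    obtain ⟨du, hdu⟩ : ∃ du, u + 1 - x = du := ⟨_, rfl⟩
    rw [hdu]
    have h1 : b * (y + p) = b * y + b * p := by ring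
    have h2 : b * p = p * b := Nat.mul_comm b p
    have h3 : a * du + a ≤ a * dk := by
      have h4 := Nat.mul_le_mul (le_refl a) (show du + 1 ≤ dk from by omega)
      have h5 : a * (du + 1) = a * du + a := by ring
      omega
    omega

/-- A lattice path with two flat segments (over `(x1,t1]` at height `c1` and over
`(x2,t2]` at height `c2`) and minimal staircase elsewhere. -/
private def twoFlat (a b x1 t1 c1 x2 t2 c2 u : ℕ) : ℕ :=
  if u + 1 ≤ x1 then Cf a b (u + 1)
  else if u + 1 ≤ t1 then c1
  else if u + 1 ≤ x2 then Cf a b (u + 1)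
  else if u + 1 ≤ t2 then c2
  else Cf a b (min (u + 1) b)

private lemma twoFlat_dyck (a b x1 t1 c1 x2 t2 c2 : ℕ) (ha : 0 < a) (hab : a < b)
    (h1 : x1 ≤ t1) (h2 : t1 ≤ x2) (h3 : x2 ≤ t2) (h4 : t2 ≤ b)
    (hc1l : Cf a b x1 ≤ c1) (hc1u : t1 < x2 → c1 ≤ Cf a b (t1 + 1))
    (hc12 : c1 ≤ c2) (hc2l : Cf a b x2 ≤ c2) (hc2e : c2 = Cf a b t2)
    (ha1 : a * t1 ≤ b * c1) :
    ∃ D : DyckPath a b,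
      (∀ u, u + 1 ≤ x1 → D.h u = Cf a b (u + 1)) ∧
      (∀ u, x1 ≤ u → u < t1 → D.h u = c1) ∧
      (∀ u, t1 ≤ u → u < x2 → D.h u = Cf a b (u + 1)) ∧
      (∀ u, x2 ≤ u → u < t2 → D.h u = c2) := by
  have hb : 0 < b := by omega
  have hmono : Monotone (twoFlat a b x1 t1 c1 x2 t2 c2) := by
    apply monotone_nat_of_le_succ
    intro u
    unfold twoFlat
    split_ifs
    all_goals first
      | omega
      | exact le_refl _
      | exact Cf_mono (by omega)
      | exact le_trans (Cf_mono (by omega)) hc1l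
      | exact le_trans (Cf_mono (by omega)) hc2l
      | exact le_trans (hc1u (by omega)) (Cf_mono (by omega))
      | exact hc12
      | exact le_trans hc12 (le_trans (le_of_eq hc2e) (Cf_mono (by omega)))
      | exact le_trans (le_of_eq hc2e) (Cf_mono (by omega))
  have hnorm : ∀ x, b ≤ x → twoFlat a b x1 t1 c1 x2 t2 c2 x = a := by
    intro x hx
    unfold twoFlat
    rw [if_neg (by omega), if_neg (by omega), if_neg (by omega), if_neg (by omega),
      show min (x + 1) b = b from by omega]
    exact Cf_b a b hb
  have habove : ∀ u, u < b → a * (u + 1) ≤ b * twoFlat a b x1 t1 c1 x2 t2 c2 u := by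
    intro u hu
    unfold twoFlat
    split_ifs
    all_goals first
      | exact Cf_lb a b (u + 1) hb
      | (rw [show min (u + 1) b = u + 1 from by omega]; exact Cf_lb a b (u + 1) hb)
      | (have h6 := Nat.mul_le_mul (le_refl a) (show u + 1 ≤ t1 from by omega); omega)
      | (have h5 : a * t2 ≤ b * c2 := by rw [hc2e]; exact Cf_lb a b t2 hb
         have h6 := Nat.mul_le_mul (le_refl a) (show u + 1 ≤ t2 from by omega); omega)
  refine ⟨⟨twoFlat a b x1 t1 c1 x2 t2 c2, hmono, hnorm, habove⟩, ?_, ?_, ?_, ?_⟩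
  · intro u h
    show twoFlat a b x1 t1 c1 x2 t2 c2 u = _
    unfold twoFlat
    rw [if_pos (by omega)]
  · intro u h h'
    show twoFlat a b x1 t1 c1 x2 t2 c2 u = _
    unfold twoFlat
    rw [if_neg (by omega), if_pos (by omega)]
  · intro u h h'
    show twoFlat a b x1 t1 c1 x2 t2 c2 u = _
    unfold twoFlat
    rw [if_neg (by omega), if_neg (by omega), if_pos (by omega)]
  · intro u h h'
    show twoFlat a b x1 t1 c1 x2 t2 c2 u = _
    unfold twoFlat
    rw [if_neg (by omega), if_neg (by omega), if_neg (by omega), if_pos (by omega)]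

private lemma adm_unpack {a b x y : ℕ} (ha : 0 < a) (hcop : Nat.Coprime a b)
    (hxy : x < y) (h : y - x - 1 ∈ Sab a b) :
    ∃ p r, 1 ≤ p ∧ p < a ∧ 1 ≤ r ∧ r < a ∧ a * (y - x) + r = p * b + a := by
  obtain ⟨p, hp, hpe⟩ := Finset.mem_image.mp h
  rw [Finset.mem_Icc] at hp
  set r := p * b % a with hr
  have hmod := Nat.div_add_mod (p * b) a
  have hrlt : r < a := Nat.mod_lt _ ha
  have hrpos : r ≠ 0 := by
    intro h0
    have hdvd : a ∣ p * b := Nat.dvd_of_mod_eq_zero (by omega)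
    have hp2 : a ∣ p := hcop.dvd_of_dvd_mul_right hdvd
    have := Nat.le_of_dvd (by omega) hp2
    omega
  have h1 : a * (y - x - 1) + r = p * b := by rw [← hpe]; omega
  have hyx : y - x - 1 + 1 = y - x := by omega
  have h2 : a * (y - x) = a * (y - x - 1) + a := by
    conv_lhs => rw [← hyx]
    ring
  exact ⟨p, r, hp.1, by omega, by omega, hrlt, by omega⟩

private lemma exists_path_disjoint (a b i j k m p q r1 r2 : ℕ)
    (ha : 0 < a) (hab : a < b)
    (hij : i + 2 ≤ j) (hjk : j ≤ k) (hkm : k + 2 ≤ m) (hmb : m ≤ b)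
    (hp : 1 ≤ p) (hr1 : 1 ≤ r1) (hr1a : r1 < a) (he1 : a * (j - i) + r1 = p * b + a)
    (hq : 1 ≤ q) (hr2 : 1 ≤ r2) (hr2a : r2 < a) (he2 : a * (m - k) + r2 = q * b + a) :
    ∃ D : DyckPath a b, (i, j) ∈ FD a b D ∧ (k, m) ∈ FD a b D := by
  have hb : 0 < b := by omega
  obtain ⟨d1, hd1⟩ : ∃ d, j - i = d := ⟨_, rfl⟩
  obtain ⟨d2, hd2⟩ : ∃ d, m - k = d := ⟨_, rfl⟩
  rw [hd1] at he1
  rw [hd2] at he2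
  set s1 := a - r1 with hs1
  set s2 := a - r2 with hs2
  set y1 := (a * i + s1 + (b - 1)) / b with hy1
  set y2 := (a * k + s2 + (b - 1)) / b with hy2
  have hsplit1 : a * j = a * i + a * d1 := by
    rw [← Nat.mul_add]; congr 1; omega
  have hsplit2 : a * m = a * k + a * d2 := by
    rw [← Nat.mul_add]; congr 1; omega
  have hCj : Cf a b j = y1 + p := by
    have hc : b * p = p * b := Nat.mul_comm b p
    have hnum : a * j + (b - 1) = a * i + s1 + (b - 1) + b * p := by omega
    show (a * j + (b - 1)) / b = y1 + p
    rw [hnum, Nat.add_mul_div_left _ _ hb, hy1]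
  have hCm : Cf a b m = y2 + q := by
    have hc : b * q = q * b := Nat.mul_comm b q
    have hnum : a * m + (b - 1) = a * k + s2 + (b - 1) + b * q := by omega
    show (a * m + (b - 1)) / b = y2 + q
    rw [hnum, Nat.add_mul_div_left _ _ hb, hy2]
  obtain ⟨D, hev1, hev2, hev3, hev4⟩ := twoFlat_dyck a b i j (Cf a b j) k m (Cf a b m)
    ha hab (by omega) hjk (by omega) hmb (Cf_mono (by omega))
    (fun _ => Cf_mono (by omega)) (Cf_mono (by omega)) (Cf_mono (by omega)) rfl
    (Cf_lb a b j hb)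
  have hy1lb : Cf a b i ≤ y1 := by
    rw [hy1]; exact Nat.div_le_div_right (by omega)
  have hy2lb : Cf a b k ≤ y2 := by
    rw [hy2]; exact Nat.div_le_div_right (by omega)
  refine ⟨D, ⟨y1, ⟨by omega, ?_, ?_⟩, ?_, ?_⟩, ⟨y2, ⟨by omega, ?_, ?_⟩, ?_, ?_⟩⟩
  · by_cases hi : i = 0
    · rw [if_pos hi]; exact Nat.zero_le _
    · have h' := hev1 (i - 1) (by omega)
      rw [show i - 1 + 1 = i from by omega] at h'
      rw [if_neg hi, h']; exact hy1lb
  · rw [hev2 i le_rfl (by omega), hCj]; omega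
  · have hy1pos : 1 ≤ y1 := by
      rw [hy1]; exact (Nat.le_div_iff_mul_le hb).mpr (by omega)
    intro hcon
    rw [Prod.mk.injEq] at hcon
    omega
  · exact laser_flat D i y1 j p r1 hb (by omega) (by omega)
      (fun u hu hu' => by rw [hev2 u hu hu', hCj]) hr1 (by omega)
      (by rw [hd1]; exact he1)
  · have hhk : D.h (k - 1) = Cf a b k := by
      rcases eq_or_lt_of_le hjk with heq | hlt
      · have h' := hev2 (k - 1) (by omega) (by omega)
        rw [h', heq]
      · have h' := hev3 (k - 1) (by omega) (by omega)
        rw [h']; congr 1; omega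
    rw [if_neg (by omega), hhk]; exact hy2lb
  · rw [hev4 k le_rfl (by omega), hCm]; omega
  · intro hcon
    rw [Prod.mk.injEq] at hcon
    omega
  · exact laser_flat D k y2 m q r2 hb (by omega) hmb
      (fun u hu hu' => by rw [hev4 u hu hu', hCm]) hr2 (by omega)
      (by rw [hd2]; exact he2)

private lemma exists_path_nested (a b i j k m p q r1 r2 : ℕ)
    (ha : 0 < a) (hab : a < b)
    (hij : i + 2 ≤ j) (hki : k ≤ i) (hjm : j < m) (hmb : m ≤ b)
    (hp : 1 ≤ p) (hr1 : 1 ≤ r1) (hr1a : r1 < a) (he1 : a * (j - i) + r1 = p * b + a)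
    (hq : 1 ≤ q) (hr2 : 1 ≤ r2) (hr2a : r2 < a) (he2 : a * (m - k) + r2 = q * b + a) :
    ∃ D : DyckPath a b, (i, j) ∈ FD a b D ∧ (k, m) ∈ FD a b D := by
  have hb : 0 < b := by omega
  obtain ⟨d1, hd1⟩ : ∃ d, j - i = d := ⟨_, rfl⟩
  obtain ⟨d2, hd2⟩ : ∃ d, m - k = d := ⟨_, rfl⟩
  obtain ⟨w, hw⟩ : ∃ w, i - k = w := ⟨_, rfl⟩
  obtain ⟨vv, hvv⟩ : ∃ v, m - j = v := ⟨_, rfl⟩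
  rw [hd1] at he1
  rw [hd2] at he2
  set s2 := a - r2 with hs2
  set y2 := (a * k + s2 + (b - 1)) / b with hy2
  have hsplit : a * d2 = a * w + a * d1 + a * vv := by
    have h5 : a * d2 = a * (w + d1 + vv) := by congr 1; omega
    rw [h5]; ring
  have hav : a ≤ a * vv := by
    have := Nat.mul_le_mul (le_refl a) (show 1 ≤ vv from by omega)
    omega
  have hpq : p < q := by
    by_contra hcon
    push_neg at hcon
    have := Nat.mul_le_mul hcon (le_refl b)
    omega
  set tq := q - p with htq
  have hqsum : q * b = p * b + tq * b := by
    rw [← Nat.add_mul]; congr 1; omega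
  set y1 := y2 + tq with hy1
  have hkey : a * w + 2 ≤ tq * b := by omega
  have hsm : a * m = a * k + a * d2 := by
    rw [← Nat.mul_add]; congr 1; omega
  have hCm : Cf a b m = y2 + q := by
    have hc : b * q = q * b := Nat.mul_comm b q
    have hnum : a * m + (b - 1) = a * k + s2 + (b - 1) + b * q := by omega
    show (a * m + (b - 1)) / b = y2 + q
    rw [hnum, Nat.add_mul_div_left _ _ hb, hy2]
  have hy2lb : a * k + s2 ≤ b * y2 := by
    rw [hy2]; exact div_lb b (a * k + s2) hb
  have hCk : Cf a b k ≤ y2 := by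
    rw [hy2]; exact Nat.div_le_div_right (by omega)
  have ha1 : a * i ≤ b * y1 := by
    have h5 : a * i = a * k + a * w := by
      rw [← Nat.mul_add]; congr 1; omega
    have h6 : b * y1 = b * y2 + b * tq := by rw [hy1]; ring
    have h7 : b * tq = tq * b := Nat.mul_comm b tq
    omega
  obtain ⟨D, hev1, hev2, hev3, hev4⟩ := twoFlat_dyck a b k i y1 i m (Cf a b m)
    ha hab hki le_rfl (by omega) hmb (le_trans hCk (by omega))
    (fun hcon => absurd hcon (lt_irrefl i)) (by rw [hCm]; omega)
    (Cf_mono (by omega)) rfl ha1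
  refine ⟨D, ⟨y1, ⟨by omega, ?_, ?_⟩, ?_, ?_⟩, ⟨y2, ⟨by omega, ?_, ?_⟩, ?_, ?_⟩⟩
  · by_cases hi : i = 0
    · rw [if_pos hi]; exact Nat.zero_le _
    · rw [if_neg hi]
      rcases eq_or_lt_of_le hki with heq | hlt
      · have h' := hev1 (i - 1) (by omega)
        rw [show i - 1 + 1 = i from by omega] at h'
        rw [h']
        have h8 : Cf a b i ≤ y2 := by rw [← heq]; exact hCk
        omega
      · rw [hev2 (i - 1) (by omega) (by omega)]
  · rw [hev4 i le_rfl (by omega), hCm]; omega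
  · intro hcon
    rw [Prod.mk.injEq] at hcon
    omega
  · exact laser_flat D i y1 j p r1 hb (by omega) (by omega)
      (fun u hu hu' => by rw [hev4 u (by omega) (by omega), hCm]; omega)
      hr1 (by omega) (by rw [hd1]; exact he1)
  · by_cases hk : k = 0
    · rw [if_pos hk]; exact Nat.zero_le _
    · have h' := hev1 (k - 1) (by omega)
      rw [show k - 1 + 1 = k from by omega] at h'
      rw [if_neg hk, h']; exact hCk
  · rcases eq_or_lt_of_le hki with heq | hlt
    · rw [hev4 k (by omega) (by omega), hCm]; omega
    · rw [hev2 k le_rfl (by omega)]; omega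
  · have hy2pos : 1 ≤ y2 := by
      rw [hy2]; exact (Nat.le_div_iff_mul_le hb).mpr (by omega)
    intro hcon
    rw [Prod.mk.injEq] at hcon
    omega
  · refine ⟨by omega, hmb, ?_, ?_⟩
    · rw [hev4 (m - 1) (by omega) (by omega), hCm, hd2]
      have h5 : b * (y2 + q) = b * y2 + b * q := by ring
      have h6 : b * q = q * b := Nat.mul_comm b q
      omega
    · intro u hu hub
      obtain ⟨du, hdu⟩ : ∃ du, u + 1 - k = du := ⟨_, rfl⟩
      by_cases hui : u < i
      · rw [hev2 u (by omega) hui, hdu]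
        have h5 : b * y1 = b * y2 + b * tq := by rw [hy1]; ring
        have h6 : b * tq = tq * b := Nat.mul_comm b tq
        have h7 : a * du ≤ a * w :=
          Nat.mul_le_mul (le_refl a) (by omega)
        omega
      · rw [hev4 u (by omega) (by omega), hCm, hdu]
        have h5 : b * (y2 + q) = b * y2 + b * q := by ring
        have h6 : b * q = q * b := Nat.mul_comm b q
        have h7 : a * du + a ≤ a * d2 := by
          have h9 := Nat.mul_le_mul (le_refl a) (show du + 1 ≤ d2 from by omega)
          have h10 : a * (du + 1) = a * du + a := by ring
          omega
        omega

end ObstructionAux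

/-- If the `a,b`-admissible diagonals `ij` and `km` form an edge of the obstruction
graph `OG(a,b)`, then `j = m`. -/
theorem OGEdge_same_larger_endpoint (a b i j k m : ℕ) (ha : 0 < a) (hab : a < b)
    (hcop : Nat.Coprime a b) (hij : i < j) (hkm : k < m)
    (h1 : Admissible a b (i, j)) (h2 : Admissible a b (k, m))
    (he : OGEdge a b (i, j) (k, m)) : j = m := by
  by_contra hne
  obtain ⟨hd12, hface, hnface⟩ := he
  have hface' : (∀ d ∈ ({(i, j), (k, m)} : Finset (ℕ × ℕ)), Admissible a b d) ∧
      ∀ d ∈ ({(i, j), (k, m)} : Finset (ℕ × ℕ)),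
        ∀ d' ∈ ({(i, j), (k, m)} : Finset (ℕ × ℕ)), ¬Crosses d d' := hface
  have hmem1 : ((i, j) : ℕ × ℕ) ∈ ({(i, j), (k, m)} : Finset (ℕ × ℕ)) := by simp
  have hmem2 : ((k, m) : ℕ × ℕ) ∈ ({(i, j), (k, m)} : Finset (ℕ × ℕ)) := by simp
  have hnc : ¬Crosses (i, j) (k, m) := hface'.2 (i, j) hmem1 (k, m) hmem2
  have hcross : ¬((i < k ∧ k < j ∧ j < m) ∨ (k < i ∧ i < m ∧ m < j)) := hnc
  obtain ⟨p, r1, hp1, hpa, hr11, hr1a, he1⟩ := adm_unpack ha hcop hij h1.2.1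
  obtain ⟨q, r2, hq1, hqa, hr21, hr2a, he2⟩ := adm_unpack ha hcop hkm h2.2.1
  obtain ⟨hij2, hjb, -⟩ := h1.1
  obtain ⟨hkm2, hmb, -⟩ := h2.1
  have hD : ∃ D : DyckPath a b, (i, j) ∈ FD a b D ∧ (k, m) ∈ FD a b D := by
    rcases Nat.lt_or_ge j m with hjm | hge
    · rcases (show j ≤ k ∨ k ≤ i from by omega) with hc | hc
      · exact exists_path_disjoint a b i j k m p q r1 r2 ha hab hij2 hc hkm2 hmb
          hp1 hr11 hr1a he1 hq1 hr21 hr2a he2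
      · exact exists_path_nested a b i j k m p q r1 r2 ha hab hij2 hc hjm hmb
          hp1 hr11 hr1a he1 hq1 hr21 hr2a he2
    · have hmj : m < j := by omega
      rcases (show m ≤ i ∨ i ≤ k from by omega) with hc | hc
      · obtain ⟨D, hB, hA⟩ := exists_path_disjoint a b k m i j q p r2 r1 ha hab hkm2
          hc hij2 hjb hq1 hr21 hr2a he2 hp1 hr11 hr1a he1
        exact ⟨D, hA, hB⟩
      · obtain ⟨D, hB, hA⟩ := exists_path_nested a b k m i j q p r2 r1 ha hab hkm2
          hc hmj hjb hq1 hr21 hr2a he2 hp1 hr11 hr1a he1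
        exact ⟨D, hA, hB⟩
  obtain ⟨D, hD1, hD2⟩ := hD
  apply hnface
  show ∃ D : DyckPath a b, ∀ d ∈ ({(i, j), (k, m)} : Finset (ℕ × ℕ)), d ∈ FD a b D
  refine ⟨D, ?_⟩
  intro d hd
  rcases Finset.mem_insert.mp hd with h | h
  · rw [h]; exact hD1
  · rw [Finset.mem_singleton.mp h]; exact hD2
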